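/- arXiv:2105.06011 — 3 statements merged into one kernel-verified Lean document; each statement's English description precedes it below -/
import Mathlib

section
/- Let G' = (V,E') be the output of the ZF-based edge augmentation algorithm on a directed graph G with n nodes, leader set of size m, and derived set Δ. Then |E'| ≥ |Δ|(|Δ|+1)/2 − m(m+1)/2 + (m+n−|Δ|)n − n. -/
variable {V : Type*} [Fintype V] [DecidableEq V]

/-- The set of white (i.e., not in `B`) in-neighbors of `v` in the digraph with edge set `E`. -/
def whiteIn (E : Finset (V × V)) (B : Finset V) (v : V) : Finset V :=
  Finset.univ.filter (fun u => (u, v) ∈ E ∧ u ∉ B)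

/-- Black node `u` forces the white node `v`: `v` is the unique white in-neighbor of `u`. -/
def Forces (E : Finset (V × V)) (B : Finset V) (u v : V) : Prop :=
  u ∈ B ∧ whiteIn E B u = {v}

/-- One step of the zero forcing process. -/
def ZFStep (E : Finset (V × V)) (B B' : Finset V) : Prop :=
  ∃ u v, Forces E B u v ∧ B' = insert v B

/-- No further color change is possible. -/
def Stalled (E : Finset (V × V)) (B : Finset V) : Prop :=
  ∀ u v, ¬ Forces E B u v

/-- `B` is a derived set of input set `V'`: obtained from `V'` by zero forcing steps,
with no further step possible. -/
def IsDerived (E : Finset (V × V)) (V' B : Finset V) : Prop :=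
  Relation.ReflTransGen (ZFStep E) V' B ∧ Stalled E B

/-- `ValidFrom E B L`: the list `L` of (forcing node, forced node) pairs is a valid
zero forcing run starting from black set `B`. -/
def ValidFrom (E : Finset (V × V)) : Finset V → List (V × V) → Prop
  | _, [] => True
  | B, (u, v) :: rest => Forces E B u v ∧ ValidFrom E (insert v B) rest

/-- Black set at the end of the run `L` started from black set `B`. -/
def finalBlack : Finset V → List (V × V) → Finset V
  | B, [] => B
  | B, (_, v) :: rest => finalBlack (insert v B) rest

/-- Edges added inside the loop of the ZF-based augmentation algorithm: each time `u`
forces `v`, after coloring `v` black, add edges to `u` from all currently black nodes. -/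
def augEdges : Finset V → List (V × V) → Finset (V × V)
  | _, [] => (∅ : Finset (V × V))
  | B, (u, v) :: rest =>
      ((insert v B).erase u).image (fun w => (w, u)) ∪ augEdges (insert v B) rest

/-- The edge set returned by the ZF-based edge augmentation algorithm: the original edges,
the edges added during the forcing loop, and all incoming edges to every node that was never
used as a forcing node. -/
def zfAugment (E : Finset (V × V)) (Vl : Finset V) (L : List (V × V)) : Finset (V × V) :=
  E ∪ augEdges Vl L ∪
    Finset.univ.filter (fun p : V × V => p.1 ≠ p.2 ∧ p.2 ∉ (L.map Prod.fst).toFinset)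

section Aux
variable {V : Type*} [Fintype V] [DecidableEq V]

lemma whiteIn_mono {E : Finset (V × V)} {B B' : Finset V} (h : B ⊆ B') (u : V) :
    whiteIn E B' u ⊆ whiteIn E B u := by
  intro x hx
  simp only [whiteIn, Finset.mem_filter, Finset.mem_univ, true_and] at hx ⊢
  exact ⟨hx.1, fun hb => hx.2 (h hb)⟩

lemma forces_spec {E : Finset (V × V)} {B : Finset V} {u v : V} (hf : Forces E B u v) :
    u ∈ B ∧ v ∉ B := by
  obtain ⟨hu, hw⟩ := hf
  have : v ∈ whiteIn E B u := hw ▸ Finset.mem_singleton_self v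
  simp only [whiteIn, Finset.mem_filter] at this
  exact ⟨hu, this.2.2⟩

lemma not_forcing_of_empty {E : Finset (V × V)} {B : Finset V} {u : V} {L : List (V × V)}
    (h : whiteIn E B u = ∅) (hv : ValidFrom E B L) : u ∉ L.map Prod.fst := by
  induction L generalizing B with
  | nil => simp
  | cons p rest ih =>
    obtain ⟨a, b⟩ := p
    obtain ⟨⟨_, hw⟩, hrest⟩ := hv
    simp only [List.map_cons, List.mem_cons, not_or]
    constructor
    · rintro rfl
      rw [h] at hw
      exact Finset.singleton_ne_empty b hw.symm
    · exact ih (Finset.subset_empty.mp (h ▸ whiteIn_mono (Finset.subset_insert b B) u)) hrest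

lemma head_not_in_rest {E : Finset (V × V)} {B : Finset V} {u v : V} {rest : List (V × V)}
    (hf : Forces E B u v) (hrest : ValidFrom E (insert v B) rest) :
    u ∉ rest.map Prod.fst := by
  apply not_forcing_of_empty _ hrest
  rw [Finset.eq_empty_iff_forall_notMem]
  intro x hx
  have hx' : x ∈ whiteIn E B u := whiteIn_mono (Finset.subset_insert v B) u hx
  rw [hf.2, Finset.mem_singleton] at hx'
  subst hx'
  simp [whiteIn] at hx

lemma finalBlack_card {E : Finset (V × V)} {B : Finset V} {L : List (V × V)}
    (h : ValidFrom E B L) : (finalBlack B L).card = B.card + L.length := by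
  induction L generalizing B with
  | nil => simp [finalBlack]
  | cons p rest ih =>
    obtain ⟨u, v⟩ := p
    obtain ⟨hf, hrest⟩ := h
    simp only [finalBlack, List.length_cons]
    rw [ih hrest, Finset.card_insert_of_notMem (forces_spec hf).2]
    omega

lemma valid_nodup {E : Finset (V × V)} {B : Finset V} {L : List (V × V)}
    (h : ValidFrom E B L) : (L.map Prod.fst).Nodup := by
  induction L generalizing B with
  | nil => simp
  | cons p rest ih =>
    obtain ⟨u, v⟩ := p
    obtain ⟨hf, hrest⟩ := h
    simp only [List.map_cons, List.nodup_cons]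
    exact ⟨head_not_in_rest hf hrest, ih hrest⟩

lemma augEdges_snd {B : Finset V} {L : List (V × V)} {p : V × V}
    (hp : p ∈ augEdges B L) : p.2 ∈ L.map Prod.fst := by
  induction L generalizing B with
  | nil => simp [augEdges] at hp
  | cons q rest ih =>
    obtain ⟨u, v⟩ := q
    simp only [augEdges, Finset.mem_union] at hp
    simp only [List.map_cons, List.mem_cons]
    rcases hp with h | h
    · left
      simp only [Finset.mem_image] at h
      obtain ⟨w, _, hw⟩ := h
      rw [← hw]
    · exact Or.inr (ih h)

lemma augEdges_card {E : Finset (V × V)} {B : Finset V} {L : List (V × V)}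
    (h : ValidFrom E B L) :
    (augEdges B L).card = ∑ i ∈ Finset.range L.length, (B.card + i) := by
  induction L generalizing B with
  | nil => simp [augEdges]
  | cons q rest ih =>
    obtain ⟨u, v⟩ := q
    obtain ⟨hf, hrest⟩ := h
    have hvB : v ∉ B := (forces_spec hf).2
    have huB : u ∈ B := (forces_spec hf).1
    have hdisj : Disjoint (((insert v B).erase u).image (fun w => (w, u)))
        (augEdges (insert v B) rest) := by
      rw [Finset.disjoint_left]
      intro p hp hp'
      have h2 := augEdges_snd hp'
      have hu : p.2 = u := by
        simp only [Finset.mem_image] at hp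
        obtain ⟨w, _, hw⟩ := hp
        rw [← hw]
      exact head_not_in_rest hf hrest (hu ▸ h2)
    simp only [augEdges, List.length_cons]
    rw [Finset.card_union_of_disjoint hdisj, Finset.card_image_of_injective _
        (fun a b hab => (Prod.ext_iff.mp hab).1),
      Finset.card_erase_of_mem (Finset.mem_insert_of_mem huB), ih hrest,
      Finset.card_insert_of_notMem hvB, Finset.sum_range_succ']
    have h1 : ∑ i ∈ Finset.range rest.length, (B.card + 1 + i)
        = ∑ i ∈ Finset.range rest.length, (B.card + (i + 1)) :=
      Finset.sum_congr rfl (fun i _ => by omega)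
    omega

lemma filter_card_aux (S : Finset V) :
    (Finset.univ.filter (fun p : V × V => p.1 ≠ p.2 ∧ p.2 ∉ S)).card
      = (Fintype.card V - S.card) * (Fintype.card V - 1) := by
  have heq : Finset.univ.filter (fun p : V × V => p.1 ≠ p.2 ∧ p.2 ∉ S)
      = Sᶜ.biUnion (fun b => (Finset.univ.erase b).image (fun a => (a, b))) := by
    ext ⟨a, b⟩
    constructor
    · intro hab
      simp only [Finset.mem_filter] at hab
      simp only [Finset.mem_biUnion, Finset.mem_compl, Finset.mem_image, Finset.mem_erase]
      exact ⟨b, hab.2.2, a, ⟨hab.2.1, Finset.mem_univ a⟩, rfl⟩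
    · intro h
      simp only [Finset.mem_biUnion, Finset.mem_compl, Finset.mem_image, Finset.mem_erase] at h
      obtain ⟨c, hcS, x, ⟨hxc, -⟩, h⟩ := h
      rw [Prod.mk.injEq] at h
      obtain ⟨rfl, rfl⟩ := h
      simp only [Finset.mem_filter, Finset.mem_univ, true_and]
      exact ⟨hxc, hcS⟩
  rw [heq, Finset.card_biUnion]
  · have : ∀ b ∈ Sᶜ, ((Finset.univ.erase b).image (fun a => (a, b))).card
        = Fintype.card V - 1 := by
      intro b _
      rw [Finset.card_image_of_injective _ (fun x y h => (Prod.ext_iff.mp h).1),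
        Finset.card_erase_of_mem (Finset.mem_univ b), Finset.card_univ]
    rw [Finset.sum_congr rfl this, Finset.sum_const, Finset.card_compl, smul_eq_mul]
  · intro x _ y _ hxy
    rw [Function.onFun, Finset.disjoint_left]
    rintro p hp hp'
    simp only [Finset.mem_image] at hp hp'
    obtain ⟨a, -, ha⟩ := hp
    obtain ⟨a', -, ha'⟩ := hp'
    exact hxy ((Prod.ext_iff.mp ha).2.trans (Prod.ext_iff.mp ha').2.symm)

lemma sum_range_int (k : ℕ) : 2 * (∑ i ∈ Finset.range k, (i : ℤ)) = k * (k - 1) := by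
  induction k with
  | zero => simp
  | succ n ih =>
    rw [Finset.sum_range_succ]
    push_cast
    push_cast at ih
    linarith

end Aux

/-- Lower bound on the number of edges returned by the ZF-based augmentation algorithm. -/
theorem zfAugment_card_lower_bound (E : Finset (V × V)) (Vl : Finset V) (L : List (V × V))
    (hvalid : ValidFrom E Vl L) (hstall : Stalled E (finalBlack Vl L)) :
    let n : ℤ := Fintype.card V
    let m : ℤ := Vl.card
    let D : ℤ := (finalBlack Vl L).card
    ((zfAugment E Vl L).card : ℤ) ≥
      D * (D + 1) / 2 - m * (m + 1) / 2 + (m + n - D) * n - n := by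
  intro n m D
  have hn : n = (Fintype.card V : ℤ) := rfl
  have hm : m = (Vl.card : ℤ) := rfl
  have hDdef : D = ((finalBlack Vl L).card : ℤ) := rfl
  set S := (L.map Prod.fst).toFinset with hS
  have hnodup := valid_nodup hvalid
  have hScard : S.card = L.length := by
    rw [hS, List.toFinset_card_of_nodup hnodup, List.length_map]
  have hA := augEdges_card hvalid
  have hFc := filter_card_aux S
  have hDc : (finalBlack Vl L).card = Vl.card + L.length := finalBlack_card hvalid
  have hDn : (finalBlack Vl L).card ≤ Fintype.card V := Finset.card_le_univ _
  set F := Finset.univ.filter (fun p : V × V => p.1 ≠ p.2 ∧ p.2 ∉ S) with hF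
  have hsub : augEdges Vl L ∪ F ⊆ zfAugment E Vl L := by
    intro p hp
    rw [Finset.mem_union] at hp
    unfold zfAugment
    rw [Finset.mem_union, Finset.mem_union]
    rcases hp with h | h
    · exact Or.inl (Or.inr h)
    · exact Or.inr h
  have hdisj : Disjoint (augEdges Vl L) F := by
    rw [Finset.disjoint_left]
    intro p hp hp'
    rw [hF, Finset.mem_filter] at hp'
    exact hp'.2.2 (List.mem_toFinset.mpr (augEdges_snd hp))
  have hcard : (augEdges Vl L).card + F.card ≤ (zfAugment E Vl L).card := by
    rw [← Finset.card_union_of_disjoint hdisj]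
    exact Finset.card_le_card hsub
  by_cases hzero : Fintype.card V = 0
  · have h1 : Vl.card = 0 ∧ L.length = 0 := by omega
    have hL : L = [] := List.length_eq_zero_iff.mp h1.2
    have : D = 0 := by rw [hDdef, hDc]; push_cast; omega
    rw [this, hn, hm, h1.1, hzero]
    norm_num
  · have hn1 : 1 ≤ Fintype.card V := Nat.one_le_iff_ne_zero.mpr hzero
    have hlenn : L.length ≤ Fintype.card V := by omega
    set lenZ : ℤ := (L.length : ℤ) with hlz
    set T : ℤ := ∑ i ∈ Finset.range L.length, (i : ℤ) with hT
    have hTval : 2 * T = lenZ * (lenZ - 1) := by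
      rw [hT, hlz]; exact sum_range_int L.length
    have hAz : ((augEdges Vl L).card : ℤ) = m * lenZ + T := by
      rw [hA]
      push_cast
      rw [Finset.sum_add_distrib, Finset.sum_const, Finset.card_range, hm, hT, hlz]
      ring
    have hFz : (F.card : ℤ) = (n - lenZ) * (n - 1) := by
      rw [hFc, hScard]
      push_cast [Nat.cast_sub hlenn, Nat.cast_sub hn1]
      rw [hn, hlz]
    have hDz : D = m + lenZ := by
      rw [hDdef, hDc, hm, hlz]; push_cast; ring
    have key : D * (D + 1) = 2 * (m * lenZ + T + lenZ) + m * (m + 1) := by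
      rw [hDz]; linear_combination -hTval
    have hdiv : D * (D + 1) / 2 - m * (m + 1) / 2 = m * lenZ + T + lenZ := by
      omega
    rw [ge_iff_le, hdiv]
    have hprod1 : (m + n - D) * n = (n - lenZ) * n := by rw [hDz]; ring
    have hprod2 : (n - lenZ) * (n - 1) = (n - lenZ) * n - n + lenZ := by ring
    have hc2 : ((augEdges Vl L).card : ℤ) + (F.card : ℤ) ≤ ((zfAugment E Vl L).card : ℤ) := by
      exact_mod_cast hcard
    linarith [hAz, hFz]
end

section
/- Let G = (V,E) be a directed graph on n nodes with leader set V_ℓ of size m and derived set Δ. Any directed graph G* = (V,E*) with E ⊆ E* whose derived set with input V_ℓ has the same size |Δ| satisfies |E*| ≤ n² − n − (n−m−1)(n−m)/2 + (n−|Δ|)(n−|Δ|−1)/2. -/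
variable {V : Type*} [Fintype V] [DecidableEq V]

private lemma gauss_aux (n m D : ℕ) (h : m ≤ D) :
    2 * ∑ j ∈ Finset.Icc (m + 1) D, ((n : ℤ) - j) =
      ((n : ℤ) - m - 1) * ((n : ℤ) - m) - ((n : ℤ) - D) * ((n : ℤ) - D - 1) := by
  induction D, h using Nat.le_induction with
  | base =>
      rw [Finset.Icc_eq_empty (by omega)]
      simp
      ring
  | succ D hD ih =>
      rw [Finset.sum_Icc_succ_top (by omega : m + 1 ≤ D + 1), mul_add, ih]
      push_cast
      ring

private lemma zf_invariant (Estar : Finset (V × V)) (hloop : ∀ v : V, (v, v) ∉ Estar)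
    (Vl B : Finset V) (h : Relation.ReflTransGen (ZFStep Estar) Vl B) :
    Vl ⊆ B ∧ ∃ f : V → ℤ,
      (∀ v, ((Estar.filter (fun p => p.2 = v)).card : ℤ) ≤ f v) ∧
      (∀ v, f v ≤ (Fintype.card V : ℤ) - 1) ∧
      (∀ v, f v ≠ (Fintype.card V : ℤ) - 1 → ∀ p ∈ Estar, p.2 = v → p.1 ∈ B) ∧
      (∑ v, f v) + (∑ j ∈ Finset.Icc (Vl.card + 1) B.card, ((Fintype.card V : ℤ) - j))
        ≤ (Fintype.card V : ℤ) * ((Fintype.card V : ℤ) - 1) := by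
  induction h with
  | refl =>
      refine ⟨subset_rfl, fun _ => (Fintype.card V : ℤ) - 1, fun v => ?_, fun v => le_refl _,
        fun v hv => absurd rfl hv, ?_⟩
      · -- in-degree at most n - 1 since no self-loops
        have hle : (Estar.filter (fun p => p.2 = v)).card ≤ (Finset.univ.erase v).card := by
          apply Finset.card_le_card_of_injOn Prod.fst
          · intro p hp
            rw [Finset.mem_coe, Finset.mem_filter] at hp
            refine Finset.mem_erase.mpr ⟨?_, Finset.mem_univ _⟩
            intro hpv
            apply hloop v
            have he : p = (v, v) := Prod.ext hpv hp.2
            have hp1 := hp.1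
            rwa [he] at hp1
          · intro p hp q hq hpq
            rw [Finset.mem_coe, Finset.mem_filter] at hp hq
            exact Prod.ext hpq (hp.2.trans hq.2.symm)
        have hcv : (Finset.univ.erase v).card = Fintype.card V - 1 := by
          rw [Finset.card_erase_of_mem (Finset.mem_univ v), Finset.card_univ]
        have hpos : 1 ≤ Fintype.card V := Fintype.card_pos_iff.mpr ⟨v⟩
        rw [hcv] at hle
        show ((Estar.filter (fun p => p.2 = v)).card : ℤ) ≤ (Fintype.card V : ℤ) - 1
        omega
      · rw [Finset.Icc_eq_empty (by omega)]
        simp [Finset.sum_const, Finset.card_univ, mul_comm]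
        linarith
  | @tail B B' hR hstep ih =>
      obtain ⟨u, v, ⟨huB, hwhite⟩, rfl⟩ := hstep
      obtain ⟨hVlB, f, hf1, hf2, hf3, hf4⟩ := ih
      have hvmem : v ∈ whiteIn Estar B u := by rw [hwhite]; exact Finset.mem_singleton_self v
      rw [whiteIn, Finset.mem_filter] at hvmem
      have hvu : (v, u) ∈ Estar := hvmem.2.1
      have hvB : v ∉ B := hvmem.2.2
      have hcardins : (insert v B).card = B.card + 1 := Finset.card_insert_of_notMem hvB
      have hcardlt : B.card + 1 ≤ Fintype.card V := by
        rw [← hcardins]; exact Finset.card_le_univ _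
      have hmB : Vl.card ≤ B.card := Finset.card_le_card hVlB
      -- all in-neighbors of u are in insert v B
      have hA : ∀ p ∈ Estar, p.2 = u → p.1 ∈ insert v B := by
        intro p hp hpu
        by_cases hb : p.1 ∈ B
        · exact Finset.mem_insert_of_mem hb
        · have : p.1 ∈ whiteIn Estar B u := by
            rw [whiteIn, Finset.mem_filter]
            refine ⟨Finset.mem_univ _, ?_, hb⟩
            rwa [← hpu, Prod.mk.eta]
          rw [hwhite, Finset.mem_singleton] at this
          rw [this]; exact Finset.mem_insert_self _ _
      -- f u must be n - 1
      have hfu : f u = (Fintype.card V : ℤ) - 1 := by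
        by_contra hne
        exact hvB (hf3 u hne (v, u) hvu rfl)
      -- in-degree of u is at most |B|
      have hdegu : ((Estar.filter (fun p => p.2 = u)).card : ℤ) ≤ (B.card : ℤ) := by
        have hle : (Estar.filter (fun p => p.2 = u)).card ≤ ((insert v B).erase u).card := by
          apply Finset.card_le_card_of_injOn Prod.fst
          · intro p hp
            rw [Finset.mem_coe, Finset.mem_filter] at hp
            refine Finset.mem_erase.mpr ⟨?_, hA p hp.1 hp.2⟩
            intro hpu
            apply hloop u
            have he : p = (u, u) := Prod.ext hpu hp.2
            have hp1 := hp.1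
            rwa [he] at hp1
          · intro p hp q hq hpq
            rw [Finset.mem_coe, Finset.mem_filter] at hp hq
            exact Prod.ext hpq (hp.2.trans hq.2.symm)
        have : ((insert v B).erase u).card = B.card := by
          rw [Finset.card_erase_of_mem (Finset.mem_insert_of_mem huB), hcardins]
          omega
        rw [this] at hle
        exact_mod_cast hle
      refine ⟨hVlB.trans (Finset.subset_insert v B), Function.update f u (B.card : ℤ),
        fun w => ?_, fun w => ?_, fun w hw p hp hpw => ?_, ?_⟩
      · by_cases hwu : w = u
        · subst hwu; rw [Function.update_self]; exact hdegu
        · rw [Function.update_of_ne hwu]; exact hf1 w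
      · by_cases hwu : w = u
        · subst hwu; rw [Function.update_self]
          have : (B.card : ℤ) + 1 ≤ (Fintype.card V : ℤ) := by exact_mod_cast hcardlt
          linarith
        · rw [Function.update_of_ne hwu]; exact hf2 w
      · by_cases hwu : w = u
        · subst hwu; exact hA p hp hpw
        · rw [Function.update_of_ne hwu] at hw
          exact Finset.mem_insert_of_mem (hf3 w hw p hp hpw)
      · have hsum : ∑ w, Function.update f u (B.card : ℤ) w
            = (∑ w, f w) - f u + (B.card : ℤ) := by
          rw [Finset.sum_update_of_mem (Finset.mem_univ u)]
          rw [Finset.sum_sdiff_eq_sub (Finset.singleton_subset_iff.mpr (Finset.mem_univ u))]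
          rw [Finset.sum_singleton]
          ring
        rw [hsum, hcardins, Finset.sum_Icc_succ_top (by omega : Vl.card + 1 ≤ B.card + 1)]
        rw [hfu]
        push_cast
        push_cast at hf4
        linarith

/-- Upper bound on the number of edges of any supergraph preserving the size of the
derived set. -/
theorem derived_preserving_card_upper_bound (E Estar : Finset (V × V))
    (Vl Δ Δs : Finset V)
    (hloop : ∀ v : V, (v, v) ∉ Estar) (hsub : E ⊆ Estar)
    (hD : IsDerived E Vl Δ) (hDs : IsDerived Estar Vl Δs)
    (hcard : Δs.card = Δ.card) :
    let n : ℤ := Fintype.card V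
    let m : ℤ := Vl.card
    let D : ℤ := Δ.card
    (Estar.card : ℤ) ≤
      n ^ 2 - n - (n - m - 1) * (n - m) / 2 + (n - D) * (n - D - 1) / 2 := by
  intro n m D
  obtain ⟨hRT, _⟩ := hDs
  obtain ⟨hVl_sub, f, hf1, hf2, _, hf4⟩ := zf_invariant Estar hloop Vl Δs hRT
  have hmD : Vl.card ≤ Δs.card := Finset.card_le_card hVl_sub
  -- Estar.card = sum of in-degrees
  have hfib : Estar.card = ∑ w, (Estar.filter (fun p => p.2 = w)).card :=
    Finset.card_eq_sum_card_fiberwise (fun p _ => Finset.mem_univ p.2)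
  have h1 : (Estar.card : ℤ) ≤ ∑ w, f w := by
    rw [hfib]
    push_cast
    exact Finset.sum_le_sum (fun w _ => hf1 w)
  have hg := gauss_aux (Fintype.card V) Vl.card Δs.card hmD
  -- connect with let-bound variables
  have hnm : (Vl.card : ℤ) = m := rfl
  have hnn : ((Fintype.card V : ℕ) : ℤ) = n := rfl
  have hnD : ((Δs.card : ℕ) : ℤ) = D := by
    show ((Δs.card : ℕ) : ℤ) = ((Δ.card : ℕ) : ℤ)
    exact_mod_cast hcard
  rw [hnm, hnn, hnD] at hg
  have hf4' : (∑ w, f w) + (∑ j ∈ Finset.Icc (Vl.card + 1) Δs.card, (n - (j : ℤ)))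
      ≤ n * (n - 1) := hf4
  -- evenness for the integer divisions
  have hAeven : Even ((n - m - 1) * (n - m)) := by
    have h := Int.even_mul_succ_self (n - m - 1)
    have e : (n - m - 1) * (n - m - 1 + 1) = (n - m - 1) * (n - m) := by ring
    rwa [e] at h
  have hBeven : Even ((n - D) * (n - D - 1)) := by
    have h := Int.even_mul_succ_self (n - D - 1)
    have e : (n - D - 1) * (n - D - 1 + 1) = (n - D) * (n - D - 1) := by ring
    rwa [e] at h
  obtain ⟨a, ha⟩ := hAeven
  obtain ⟨b, hb⟩ := hBeven
  rw [ha, hb]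
  have h2a : (a + a) / 2 = a := by omega
  have h2b : (b + b) / 2 = b := by omega
  rw [h2a, h2b]
  rw [ha, hb] at hg
  nlinarith [hg, hf4', h1, sq_nonneg n]
end

section
/- Let G' = (V,E') be a directed graph, a,b ∈ V with d_{G'}(a,b) = k, and suppose every vertex v satisfies d_{G'}(a,v) + d_{G'}(v,b) = k. If u,v are vertices with d_{G'}(a,u) ≥ d_{G'}(a,v) − 1, then the graph H = (V, E' ∪ {(u,v)}) still satisfies d_H(a,b) = k. -/
variable {V : Type*} [Fintype V] [DecidableEq V]

/-- There is a directed walk of length exactly `n` from `u` to `v`. -/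
def ReachIn (E : Finset (V × V)) : ℕ → V → V → Prop
  | 0, u, v => u = v
  | n + 1, u, v => ∃ w, (u, w) ∈ E ∧ ReachIn E n w v

/-- Directed shortest-path distance (`⊤` = `∞` if there is no directed path). -/
noncomputable def ddist (E : Finset (V × V)) (u v : V) : ℕ∞ :=
  ⨅ (n : ℕ) (_ : ReachIn E n u v), (n : ℕ∞)

lemma ddist_le_of_reach {E : Finset (V × V)} {n : ℕ} {x y : V}
    (h : ReachIn E n x y) : ddist E x y ≤ (n : ℕ∞) :=
  iInf₂_le n h

lemma reach_mono {E F : Finset (V × V)} (hEF : E ⊆ F) :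
    ∀ {n : ℕ} {x y : V}, ReachIn E n x y → ReachIn F n x y := by
  intro n
  induction n with
  | zero => intro x y h; exact h
  | succ n ih =>
    rintro x y ⟨w, hw, hr⟩
    exact ⟨w, hEF hw, ih hr⟩

lemma reach_append {E : Finset (V × V)} {n : ℕ} {x w y : V}
    (h : ReachIn E n x w) (he : (w, y) ∈ E) : ReachIn E (n + 1) x y := by
  induction n generalizing x with
  | zero => cases h; exact ⟨y, he, rfl⟩
  | succ n ih =>
    obtain ⟨z, hz, hr⟩ := h
    exact ⟨z, hz, ih hr⟩

lemma ddist_spec (E : Finset (V × V)) (x y : V) :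
    ddist E x y = ⊤ ∨ ∃ n : ℕ, ReachIn E n x y ∧ ddist E x y = (n : ℕ∞) := by
  by_cases h : ∃ n : ℕ, ReachIn E n x y
  · right
    have hne : {n : ℕ | ReachIn E n x y}.Nonempty := h
    refine ⟨sInf {n : ℕ | ReachIn E n x y}, Nat.sInf_mem hne, le_antisymm ?_ ?_⟩
    · exact ddist_le_of_reach (Nat.sInf_mem hne)
    · refine le_iInf₂ fun n hn => ?_
      exact_mod_cast Nat.sInf_le hn
  · left
    push_neg at h
    simp only [ddist]
    exact iInf_eq_top.2 fun n => iInf_eq_top.2 fun hn => absurd hn (h n)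

lemma ddist_step {E : Finset (V × V)} {x y : V} (a : V) (he : (x, y) ∈ E) :
    ddist E a y ≤ ddist E a x + 1 := by
  rcases ddist_spec E a x with h | ⟨n, hr, h⟩
  · simp [h]
  · rw [h]
    have : ReachIn E (n + 1) a y := reach_append hr he
    calc ddist E a y ≤ ((n + 1 : ℕ) : ℕ∞) := ddist_le_of_reach this
    _ = (n : ℕ∞) + 1 := by push_cast; ring

/-- If every vertex lies on a shortest `a`-`b` path and `d(a,u) ≥ d(a,v) - 1`, then adding
the edge `(u,v)` preserves the distance from `a` to `b`. -/
theorem allowed_edge_preserves_distance (E' : Finset (V × V)) (a b u v : V) (k : ℕ)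
    (hdist : ddist E' a b = (k : ℕ∞))
    (hgeo : ∀ w : V, ddist E' a w + ddist E' w b = (k : ℕ∞))
    (hne : u ≠ v)
    (huv : ddist E' a v ≤ ddist E' a u + 1) :
    ddist (insert (u, v) E') a b = (k : ℕ∞) := by
  set H : Finset (V × V) := insert (u, v) E' with hH
  have hsub : E' ⊆ H := Finset.subset_insert _ _
  -- upper bound
  have hub : ddist H a b ≤ (k : ℕ∞) := by
    rw [← hdist]
    exact le_iInf₂ fun n hn => ddist_le_of_reach (reach_mono hsub hn)
  -- d(a,a) = 0
  have haa : ddist E' a a = 0 := by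
    have h := hgeo a
    rw [hdist] at h
    have hk : (k : ℕ∞) ≠ ⊤ := by simp
    have : ddist E' a a + (k : ℕ∞) = 0 + (k : ℕ∞) := by rw [zero_add]; exact h
    exact WithTop.add_right_cancel hk this
  -- every step in H increases ddist E' a · by at most 1
  have hstep : ∀ x y : V, (x, y) ∈ H → ddist E' a y ≤ ddist E' a x + 1 := by
    intro x y hxy
    rw [hH, Finset.mem_insert] at hxy
    rcases hxy with h | h
    · obtain ⟨h1, h2⟩ := Prod.mk.injEq .. ▸ h
      subst h1; subst h2
      exact huv
    · exact ddist_step a h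
  -- key: any walk in H from x to b gives d(a,b) ≤ d(a,x) + n
  have key : ∀ (n : ℕ) (x : V), ReachIn H n x b → ddist E' a b ≤ ddist E' a x + n := by
    intro n
    induction n with
    | zero => intro x h; cases h; simp
    | succ n ih =>
      rintro x ⟨w, hw, hr⟩
      have h1 := ih w hr
      have h2 := hstep x w hw
      calc ddist E' a b ≤ ddist E' a w + n := h1
      _ ≤ (ddist E' a x + 1) + n := by exact add_le_add_left h2 _
      _ = ddist E' a x + (n + 1 : ℕ) := by push_cast; ring
  -- lower bound
  have hlb : (k : ℕ∞) ≤ ddist H a b := by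
    refine le_iInf₂ fun n hn => ?_
    have := key n a hn
    rw [haa, zero_add, hdist] at this
    exact this
  exact le_antisymm hub hlb
end
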